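/- Let X be a finite topological T₀-space and let A ⊆ X be an antichain of potential down beat points of X such that U_a ∩ U_b = ∅ for all a, b ∈ A with a ≠ b. Then the number of distinct semiflows on X satisfies S_F(X) ≥ 2^{|A|}. -/

import Mathlib

open NNReal Topology

section FiniteTop
variable {X : Type*} [TopologicalSpace X] [Finite X]

lemma isOpen_specSet (y : X) : IsOpen {z : X | z ⤳ y} := by
  have h : {z : X | z ⤳ y} = ⋂₀ {U : Set X | IsOpen U ∧ y ∈ U} := by
    ext z
    simp only [Set.mem_setOf_eq, Set.mem_sInter]
    constructor
    · rintro h U ⟨hU, hyU⟩; exact h.mem_open hU hyU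
    · intro h
      rw [specializes_iff_forall_open]
      intro U hU hyU
      exact h U ⟨hU, hyU⟩
  rw [h]
  exact Set.Finite.isOpen_sInter (Set.toFinite _) (fun U hU => hU.1)

lemma continuous_of_spec_mono (f : X → X) (hf : ∀ a b : X, a ⤳ b → f a ⤳ f b) :
    Continuous f := by
  rw [continuous_def]
  intro U hU
  have h : f ⁻¹' U = ⋃ y ∈ f ⁻¹' U, {z : X | z ⤳ y} := by
    ext z
    simp only [Set.mem_preimage, Set.mem_iUnion, Set.mem_setOf_eq]
    constructor
    · intro h; exact ⟨z, h, specializes_refl z⟩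
    · rintro ⟨y, hy, hzy⟩; exact (hf z y hzy).mem_open hU hy
  rw [h]
  exact isOpen_biUnion fun y _ => isOpen_specSet y

end FiniteTop

section IdemPow

lemma idem_pow {M : Type*} [Monoid M] {e : M} (he : e * e = e) :
    ∀ c : ℕ, 0 < c → e ^ c = e := by
  intro c hc
  induction c with
  | zero => omega
  | succ c ih =>
    rcases Nat.eq_zero_or_pos c with rfl | hc'
    · simp
    · rw [pow_succ, ih hc', he]

lemma exists_pow_idem (M : Type*) [Monoid M] [Finite M] :
    ∃ N : ℕ, 0 < N ∧ ∀ a : M, a ^ N * a ^ N = a ^ N := by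
  have key : ∀ a : M, ∃ n : ℕ, 0 < n ∧ a ^ n * a ^ n = a ^ n := by
    intro a
    obtain ⟨i, j, hne, hij⟩ := Finite.exists_ne_map_eq_of_infinite (fun n : ℕ => a ^ n)
    wlog h : i < j generalizing i j
    · exact this j i hne.symm hij.symm (by omega)
    set p := j - i with hp
    have hp1 : 0 < p := by omega
    have base : a ^ (i + p) = a ^ i := by
      have : i + p = j := by omega
      rw [this, ← hij]
    have claim : ∀ k r : ℕ, a ^ (i + k * p + r) = a ^ (i + r) := by
      intro k
      induction k with
      | zero => simp
      | succ k ih =>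
        intro r
        have h1 : i + (k + 1) * p + r = i + k * p + (p + r) := by ring
        have h2 : i + (p + r) = (i + p) + r := by ring
        rw [h1, ih (p + r), h2, pow_add, base, ← pow_add]
    have hip : i + 1 ≤ (i + 1) * p := Nat.le_mul_of_pos_right _ hp1
    refine ⟨(i + 1) * p, by positivity, ?_⟩
    set r := (i + 1) * p - i with hr
    have e1 : (i + 1) * p + (i + 1) * p = i + (i + 1) * p + r := by omega
    have e2 : (i + 1) * p = i + r := by omega
    rw [← pow_add, e1, claim (i + 1) r, ← e2]
  choose nn hn1 hn2 using key
  have : ∃ _ : Fintype M, True := ⟨Fintype.ofFinite M, trivial⟩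
  obtain ⟨ft, -⟩ := this
  refine ⟨∏ a : M, nn a, Finset.prod_pos (fun a _ => hn1 a), ?_⟩
  intro a
  obtain ⟨c, hc⟩ := Finset.dvd_prod_of_mem nn (Finset.mem_univ a)
  have hcpos : 0 < c := by
    rcases Nat.eq_zero_or_pos c with rfl | h
    · have := Finset.prod_pos (fun a (_ : a ∈ Finset.univ) => hn1 a)
      omega
    · exact h
  have hN : a ^ (∏ b : M, nn b) = a ^ nn a := by
    rw [hc, pow_mul, idem_pow (hn2 a) c hcpos]
  rw [hN]; exact hn2 a

end IdemPow


/-- A semiflow on a topological space `X`: a jointly continuous map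
`φ : ℝ≥0 × X → X` with `φ 0 x = x` and `φ s (φ t x) = φ (s + t) x`. -/
def IsSemiflow {X : Type*} [TopologicalSpace X] (φ : ℝ≥0 → X → X) : Prop :=
  Continuous (fun p : ℝ≥0 × X => φ p.1 p.2) ∧
  (∀ x : X, φ 0 x = x) ∧
  ∀ (s t : ℝ≥0) (x : X), φ s (φ t x) = φ (s + t) x

/-- A semiflow is trivial if every time-`t` map is the identity. -/
def IsTrivialSemiflow {X : Type*} [TopologicalSpace X] (φ : ℝ≥0 → X → X) : Prop :=
  ∀ (t : ℝ≥0) (x : X), φ t x = x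

/-- `x` is a down beat point: `U_x \ {x}` has a greatest element in the
specialization order (`y ⤳ x` means `y ≤ x`, i.e. `y ∈ U_x`). -/
def IsDownBeatPoint {X : Type*} [TopologicalSpace X] (x : X) : Prop :=
  ∃ m : X, (m ⤳ x ∧ m ≠ x) ∧ ∀ y : X, y ⤳ x → y ≠ x → y ⤳ m

/-- `x` is an up beat point: `F_x \ {x}` has a least element in the
specialization order. -/
def IsUpBeatPoint {X : Type*} [TopologicalSpace X] (x : X) : Prop :=
  ∃ m : X, (x ⤳ m ∧ m ≠ x) ∧ ∀ y : X, x ⤳ y → y ≠ x → m ⤳ y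

/-- The height of `x` in the specialization order: the supremum of lengths `n`
of strict chains `c 0 < c 1 < ⋯ < c n = x`. -/
noncomputable def specHeight {X : Type*} [TopologicalSpace X] (x : X) : ℕ :=
  sSup {n : ℕ | ∃ c : Fin (n + 1) → X, c (Fin.last n) = x ∧
    ∀ i j : Fin (n + 1), i < j → c i ⤳ c j ∧ c i ≠ c j}

/-- `y` is a potential down beat point: there is a sequence of distinct points
`x 0, …, x n` ending at `y` such that `x 0` is a down beat point of `X`, each
`x (i+1)` is a down beat point of the subspace `X \ {x 0, …, x i}`, and the
heights satisfy `ht (x i) ≤ ht (x j) ↔ i ≤ j`. -/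
def IsPotentialDownBeatPoint {X : Type*} [TopologicalSpace X] (y : X) : Prop :=
  ∃ (n : ℕ) (x : Fin (n + 1) → X),
    Function.Injective x ∧
    x (Fin.last n) = y ∧
    IsDownBeatPoint (x 0) ∧
    (∀ (i : Fin n) (h : x i.succ ∈ {z : X | ∀ j : Fin (n + 1), j ≤ i.castSucc → z ≠ x j}),
      IsDownBeatPoint (X := ↥{z : X | ∀ j : Fin (n + 1), j ≤ i.castSucc → z ≠ x j})
        ⟨x i.succ, h⟩) ∧
    ∀ i j : Fin (n + 1), (specHeight (x i) ≤ specHeight (x j) ↔ i ≤ j)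


section Rigidity

variable {X : Type*} [TopologicalSpace X] [Finite X] [T0Space X]

lemma semiflow_const {φ : ℝ≥0 → X → X} (hφ : IsSemiflow φ) :
    ∀ s t : ℝ≥0, 0 < s → 0 < t → φ s = φ t := by
  obtain ⟨hc, h0, hadd⟩ := hφ
  have hmap : ∀ t : ℝ≥0, Continuous (φ t) := fun t =>
    hc.comp (continuous_const.prodMk continuous_id)
  -- uniform epsilon from continuity at time 0
  have hε : ∃ ε : ℝ≥0, 0 < ε ∧ ∀ u : ℝ≥0, u < ε → ∀ z : X, φ u z ⤳ z := by
    have hz : ∀ z : X, ∃ ε : ℝ≥0, 0 < ε ∧ ∀ u : ℝ≥0, u < ε → φ u z ⤳ z := by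
      intro z
      have hcz : Continuous fun u : ℝ≥0 => φ u z :=
        hc.comp (continuous_id.prodMk continuous_const)
      have hopen : IsOpen ((fun u : ℝ≥0 => φ u z) ⁻¹' {w : X | w ⤳ z}) :=
        hcz.isOpen_preimage _ (isOpen_specSet z)
      have hmem : (fun u : ℝ≥0 => φ u z) ⁻¹' {w : X | w ⤳ z} ∈ nhds (0 : ℝ≥0) := by
        refine hopen.mem_nhds ?_
        simp only [Set.mem_preimage, Set.mem_setOf_eq, h0 z]
        exact specializes_refl z
      obtain ⟨ε, hε1, hε2⟩ := (NNReal.nhds_zero_basis.mem_iff).1 hmem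
      exact ⟨ε, hε1, fun u hu => hε2 hu⟩
    choose e he1 he2 using hz
    rcases isEmpty_or_nonempty X with hX | hX
    · exact ⟨1, one_pos, fun u _ z => (IsEmpty.false z).elim⟩
    · have : ∃ _ : Fintype X, True := ⟨Fintype.ofFinite X, trivial⟩
      obtain ⟨ft, -⟩ := this
      refine ⟨Finset.univ.inf' Finset.univ_nonempty e, ?_, ?_⟩
      · exact (Finset.lt_inf'_iff _).2 fun z _ => he1 z
      · intro u hu z
        exact he2 z u (lt_of_lt_of_le hu (Finset.inf'_le _ (Finset.mem_univ z)))
  obtain ⟨ε, hε1, hε2⟩ := hε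
  -- the time-t maps as a finite monoid
  set E : ℝ≥0 → Function.End X := fun t => φ t with hE
  have hmul : ∀ s t : ℝ≥0, E s * E t = E (s + t) := by
    intro s t
    funext z
    exact hadd s t z
  have hpowE : ∀ (t : ℝ≥0) (k : ℕ), 0 < k → E t ^ k = E (k * t) := by
    intro t k hk
    induction k with
    | zero => omega
    | succ k ih =>
      rcases Nat.eq_zero_or_pos k with rfl | hk'
      · simp
      · rw [pow_succ, ih hk', hmul]
        congr 1
        push_cast
        ring
  have hfin : Finite (Function.End X) := by
    unfold Function.End
    infer_instance
  obtain ⟨N, hN1, hN2⟩ := exists_pow_idem (Function.End X)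
  have hidem : ∀ t : ℝ≥0, 0 < t → E t * E t = E t := by
    intro t ht
    have hNne : (N : ℝ≥0) ≠ 0 := Nat.cast_ne_zero.2 hN1.ne'
    have ht' : E t = E (t / N) ^ N := by
      rw [hpowE _ N hN1]
      congr 1
      rw [mul_comm, div_mul_cancel₀ _ hNne]
    rw [ht']
    exact hN2 _
  have hdouble : ∀ t : ℝ≥0, 0 < t → E (2 * t) = E t := by
    intro t ht
    have : (2 : ℝ≥0) * t = t + t := by ring
    rw [this, ← hmul, hidem t ht]
  have hpow2 : ∀ (t : ℝ≥0), 0 < t → ∀ k : ℕ, E (t / 2 ^ k) = E t := by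
    intro t ht k
    induction k with
    | zero => simp
    | succ k ih =>
      have h2 : (0:ℝ≥0) < t / 2 ^ (k+1) := by positivity
      have : (2 : ℝ≥0) * (t / 2 ^ (k + 1)) = t / 2 ^ k := by
        rw [pow_succ]
        rw [eq_div_iff (by positivity : (2:ℝ≥0) ^ k ≠ 0)]
        calc 2 * (t / (2 ^ k * 2)) * 2 ^ k = t / (2 ^ k * 2) * (2 ^ k * 2) := by ring
          _ = t := div_mul_cancel₀ _ (by positivity)
      calc E (t / 2 ^ (k+1)) = E (2 * (t / 2 ^ (k+1))) := (hdouble _ h2).symm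
        _ = E (t / 2 ^ k) := by rw [this]
        _ = E t := ih
  have hsmall : ∀ (s c : ℝ≥0), 0 < c → ∃ k : ℕ, s / 2 ^ k < c := by
    intro s c hcpos
    obtain ⟨k, hk⟩ := pow_unbounded_of_one_lt (s / c) (one_lt_two (α := ℝ≥0))
    refine ⟨k, ?_⟩
    rw [div_lt_iff₀ (by positivity : (0:ℝ≥0) < 2 ^ k)]
    rw [div_lt_iff₀ hcpos] at hk
    calc s < 2 ^ k * c := hk
      _ = c * 2 ^ k := mul_comm _ _
  -- key comparison for small times
  have key : ∀ s t : ℝ≥0, 0 < s → 0 < t → s < ε → t < ε → ∀ z : X, φ t z ⤳ φ s z := by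
    intro s t hs ht hsε htε z
    obtain ⟨m, hm⟩ := hsmall s t ht
    set u := s / 2 ^ m with hu
    have hus : E u = E s := hpow2 s hs m
    have hut : u ≤ t := hm.le
    have htu : t = u + (t - u) := (add_tsub_cancel_of_le hut).symm
    have h1 : φ t z = φ u (φ (t - u) z) := by
      rw [hadd, ← htu]
    have h2 : φ (t - u) z ⤳ z := hε2 _ (lt_of_le_of_lt tsub_le_self htε) z
    have h3 : φ u (φ (t - u) z) ⤳ φ u z := h2.map (hmap u)
    have h4 : φ u z = φ s z := by
      have : φ u = φ s := hus
      rw [this]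
    rw [h1]
    rw [h4] at h3
    exact h3
  intro s t hs ht
  obtain ⟨ks, hks⟩ := hsmall s ε hε1
  obtain ⟨kt, hkt⟩ := hsmall t ε hε1
  set s' := s / 2 ^ ks with hs'
  set t' := t / 2 ^ kt with ht'
  have hs'pos : 0 < s' := by positivity
  have ht'pos : 0 < t' := by positivity
  have hES : φ s = φ s' := (hpow2 s hs ks).symm
  have hET : φ t = φ t' := (hpow2 t ht kt).symm
  rw [hES, hET]
  funext z
  exact ((key t' s' ht'pos hs'pos hkt hks z).antisymm
    (key s' t' hs'pos ht'pos hks hkt z)).eq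

lemma finite_semiflows : Finite {φ : ℝ≥0 → X → X // IsSemiflow φ} := by
  apply Finite.of_injective (fun φ : {φ : ℝ≥0 → X → X // IsSemiflow φ} => φ.1 1)
  intro φ ψ h
  apply Subtype.ext
  funext t z
  rcases eq_or_ne t 0 with rfl | ht
  · rw [φ.2.2.1 z, ψ.2.2.1 z]
  · have ht' : 0 < t := pos_iff_ne_zero.2 ht
    have h1 : φ.1 t = φ.1 1 := semiflow_const φ.2 t 1 ht' one_pos
    have h2 : ψ.1 t = ψ.1 1 := semiflow_const ψ.2 t 1 ht' one_pos
    rw [h1, h2]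
    exact congrFun h z

end Rigidity

section Retraction

open scoped Classical in
noncomputable def iterRet {X : Type*} {n : ℕ} (x m : Fin (n + 1) → X) : ℕ → X → X
  | 0 => id
  | k + 1 => fun z =>
      if h : k < n + 1 then
        (if iterRet x m k z = x ⟨k, h⟩ then m ⟨k, h⟩ else iterRet x m k z)
      else iterRet x m k z

lemma iterRet_spec {X : Type*} [TopologicalSpace X] {n : ℕ} (x m : Fin (n + 1) → X)
    (hm1 : ∀ i, m i ⤳ x i)
    (hm3 : ∀ i j, j ≤ i → m i ≠ x j)
    (hm4 : ∀ i y, (∀ j, j < i → y ≠ x j) → y ⤳ x i → y ≠ x i → y ⤳ m i) :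
    ∀ k : ℕ,
      (∀ z, iterRet x m k z ⤳ z) ∧
      (∀ z (j : Fin (n + 1)), (j : ℕ) < k → iterRet x m k z ≠ x j) ∧
      (∀ z, (∀ j : Fin (n + 1), (j : ℕ) < k → z ≠ x j) → iterRet x m k z = z) ∧
      (∀ z w, z ⤳ w → iterRet x m k z ⤳ iterRet x m k w) := by
  classical
  intro k
  induction k with
  | zero =>
    refine ⟨fun z => specializes_refl z, fun z j hj => by omega, fun z _ => rfl,
      fun z w h => h⟩
  | succ k ih =>
    obtain ⟨ih1, ih2, ih3, ih4⟩ := ih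
    by_cases h : k < n + 1
    · set i : Fin (n + 1) := ⟨k, h⟩ with hi
      have unfold1 : ∀ z, iterRet x m (k + 1) z =
          (if iterRet x m k z = x i then m i else iterRet x m k z) := by
        intro z
        simp only [iterRet, dif_pos h, hi]
      refine ⟨?_, ?_, ?_, ?_⟩
      · intro z
        rw [unfold1]
        by_cases hw : iterRet x m k z = x i
        · rw [if_pos hw]
          exact (hm1 i).trans (hw ▸ ih1 z)
        · rw [if_neg hw]
          exact ih1 z
      · intro z j hj
        rw [unfold1]
        by_cases hw : iterRet x m k z = x i
        · rw [if_pos hw]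
          exact hm3 i j (by rw [Fin.le_def]; show (j : ℕ) ≤ k; omega)
        · rw [if_neg hw]
          rcases Nat.lt_or_ge (j : ℕ) k with hjk | hjk
          · exact ih2 z j hjk
          · have : j = i := by
              apply Fin.ext
              simp only [hi]
              omega
            rw [this]
            exact hw
      · intro z hz
        have hz' : ∀ j : Fin (n + 1), (j : ℕ) < k → z ≠ x j := fun j hj => hz j (by omega)
        rw [unfold1, ih3 z hz', if_neg (hz i (by simp [hi]))]
      · intro z w hzw
        have huv := ih4 z w hzw
        rw [unfold1 z, unfold1 w]
        by_cases hv : iterRet x m k w = x i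
        · rw [if_pos hv]
          by_cases hu : iterRet x m k z = x i
          · rw [if_pos hu]
          · rw [if_neg hu]
            refine hm4 i _ ?_ (hv ▸ huv) hu
            intro j hj
            exact ih2 z j (by rw [Fin.lt_def] at hj; exact hj)
        · rw [if_neg hv]
          by_cases hu : iterRet x m k z = x i
          · rw [if_pos hu]
            exact (hm1 i).trans (hu ▸ huv)
          · rw [if_neg hu]
            exact huv
    · have unfold2 : ∀ z, iterRet x m (k + 1) z = iterRet x m k z := by
        intro z
        simp only [iterRet, dif_neg h]
      refine ⟨?_, ?_, ?_, ?_⟩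
      · intro z; rw [unfold2]; exact ih1 z
      · intro z j hj
        rw [unfold2]
        exact ih2 z j (by have := j.isLt; omega)
      · intro z hz
        rw [unfold2]
        exact ih3 z fun j hj => hz j (by omega)
      · intro z w hzw
        rw [unfold2 z, unfold2 w]
        exact ih4 z w hzw

lemma exists_retraction {X : Type*} [TopologicalSpace X] {a : X}
    (ha : IsPotentialDownBeatPoint a) :
    ∃ g : X → X, (∀ z w, z ⤳ w → g z ⤳ g w) ∧ (∀ z, g z ⤳ z) ∧
      (∀ z, g (g z) = g z) ∧ g a ≠ a := by
  obtain ⟨n, x, hinj, hlast, hd0, hdsucc, -⟩ := ha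
  have hm : ∀ i : Fin (n + 1), ∃ m : X, m ⤳ x i ∧
      (∀ j, j ≤ i → m ≠ x j) ∧
      (∀ y, (∀ j, j < i → y ≠ x j) → y ⤳ x i → y ≠ x i → y ⤳ m) := by
    intro i
    induction i using Fin.cases with
    | zero =>
      obtain ⟨m, ⟨h1, h2⟩, h3⟩ := hd0
      refine ⟨m, h1, ?_, fun y _ => h3 y⟩
      intro j hj
      rw [Fin.le_zero_iff.mp hj]
      exact h2
    | succ i =>
      have hmem : x i.succ ∈ {z : X | ∀ j : Fin (n + 1), j ≤ i.castSucc → z ≠ x j} := by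
        intro j hj hEq
        have := hinj hEq
        rw [← this] at hj
        rw [Fin.le_def] at hj
        simp only [Fin.coe_castSucc, Fin.val_succ] at hj
        omega
      obtain ⟨m', ⟨hs1, hs2⟩, hs3⟩ := hdsucc i hmem
      refine ⟨m'.1, ?_, ?_, ?_⟩
      · exact (subtype_specializes_iff m' ⟨_, hmem⟩).mp hs1
      · intro j hj
        rcases eq_or_lt_of_le hj with rfl | hlt
        · exact fun hEq => hs2 (Subtype.ext hEq)
        · apply m'.2 j
          rw [Fin.le_def]
          rw [Fin.lt_def] at hlt
          simp only [Fin.coe_castSucc]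
          simp only [Fin.val_succ] at hlt
          omega
      · intro y hy hspec hne
        have hymem : y ∈ {z : X | ∀ j : Fin (n + 1), j ≤ i.castSucc → z ≠ x j} := by
          intro j hj
          apply hy j
          rw [Fin.lt_def]
          rw [Fin.le_def] at hj
          simp only [Fin.coe_castSucc] at hj
          simp only [Fin.val_succ]
          omega
        have hres := hs3 ⟨y, hymem⟩ ((subtype_specializes_iff _ _).mpr hspec)
          (fun hEq => hne (congrArg Subtype.val hEq))
        exact (subtype_specializes_iff _ _).mp hres
  choose m hm1 hm3 hm4 using hm
  obtain ⟨H1, H2, H3, H4⟩ := iterRet_spec x m hm1 hm3 hm4 (n + 1)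
  refine ⟨iterRet x m (n + 1), H4, H1, ?_, ?_⟩
  · intro z
    exact H3 _ (fun j _ => H2 z j j.isLt)
  · rw [← hlast]
    exact fun hEq => H2 (x (Fin.last n)) (Fin.last n) (by simp) hEq

end Retraction
/-- If `A` is an antichain of potential down beat points with pairwise
disjoint minimal open sets, then `S_F(X) ≥ 2 ^ |A|`. -/
theorem card_semiflows_ge_pow_antichain {X : Type*} [TopologicalSpace X] [Finite X]
    [T0Space X] (A : Set X) (hA : IsAntichain (· ⤳ ·) A)
    (hpot : ∀ a ∈ A, IsPotentialDownBeatPoint a)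
    (hdisj : ∀ a ∈ A, ∀ b ∈ A, a ≠ b → {z : X | z ⤳ a} ∩ {z : X | z ⤳ b} = ∅) :
    2 ^ A.ncard ≤ Nat.card {φ : ℝ≥0 → X → X // IsSemiflow φ} := by
  classical
  have hex : ∀ a : ↥A, ∃ g : X → X, (∀ z w, z ⤳ w → g z ⤳ g w) ∧ (∀ z, g z ⤳ z) ∧
      (∀ z, g (g z) = g z) ∧ g a.1 ≠ a.1 := fun a => exists_retraction (hpot a.1 a.2)
  choose g hg1 hg2 hg3 hg4 using hex
  have huniq : ∀ (z : X) (a b : ↥A), z ⤳ a.1 → z ⤳ b.1 → a = b := by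
    intro z a b hza hzb
    by_contra hne
    have h := hdisj a.1 a.2 b.1 b.2 (fun hEq => hne (Subtype.ext hEq))
    have hz : z ∈ ({w : X | w ⤳ a.1} ∩ {w : X | w ⤳ b.1}) := ⟨hza, hzb⟩
    rw [h] at hz
    exact hz
  set F : Set ↥A → X → X := fun S z =>
    if h : ∃ a : ↥A, a ∈ S ∧ z ⤳ a.1 then g h.choose z else z with hF
  have hFeq : ∀ (S : Set ↥A) (a : ↥A), a ∈ S → ∀ z, z ⤳ a.1 → F S z = g a z := by
    intro S a haS z hz
    have hex' : ∃ b : ↥A, b ∈ S ∧ z ⤳ b.1 := ⟨a, haS, hz⟩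
    have hch : hex'.choose = a := huniq z hex'.choose a hex'.choose_spec.2 hz
    simp only [hF]
    rw [dif_pos hex', hch]
  have hFnot : ∀ (S : Set ↥A) (z : X), (¬ ∃ a : ↥A, a ∈ S ∧ z ⤳ a.1) → F S z = z := by
    intro S z h
    simp only [hF]
    rw [dif_neg h]
  have hFle : ∀ (S : Set ↥A) (z : X), F S z ⤳ z := by
    intro S z
    by_cases h : ∃ a : ↥A, a ∈ S ∧ z ⤳ a.1
    · obtain ⟨a, haS, hza⟩ := h
      rw [hFeq S a haS z hza]
      exact hg2 a z
    · rw [hFnot S z h]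
  have hFmono : ∀ (S : Set ↥A) (z w : X), z ⤳ w → F S z ⤳ F S w := by
    intro S z w hzw
    by_cases h : ∃ a : ↥A, a ∈ S ∧ w ⤳ a.1
    · obtain ⟨a, haS, hwa⟩ := h
      rw [hFeq S a haS w hwa, hFeq S a haS z (hzw.trans hwa)]
      exact hg1 a z w hzw
    · rw [hFnot S w h]
      exact (hFle S z).trans hzw
  have hFidem : ∀ (S : Set ↥A) (z : X), F S (F S z) = F S z := by
    intro S z
    by_cases h : ∃ a : ↥A, a ∈ S ∧ z ⤳ a.1
    · obtain ⟨a, haS, hza⟩ := h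
      rw [hFeq S a haS z hza, hFeq S a haS _ ((hg2 a z).trans hza), hg3]
    · rw [hFnot S z h, hFnot S z h]
  have hFin : ∀ (S : Set ↥A) (a : ↥A), a ∈ S → F S a.1 ≠ a.1 := by
    intro S a haS
    rw [hFeq S a haS a.1 (specializes_refl _)]
    exact hg4 a
  have hFout : ∀ (S : Set ↥A) (a : ↥A), a ∉ S → F S a.1 = a.1 := by
    intro S a haS
    apply hFnot
    rintro ⟨b, hbS, hab⟩
    have hne : a ≠ b := fun hEq => haS (hEq ▸ hbS)
    have hnev : a.1 ≠ b.1 := fun hEq => hne (Subtype.ext hEq)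
    exact hA a.2 b.2 hnev hab
  have hcontF : ∀ S : Set ↥A, Continuous (F S) := fun S =>
    continuous_of_spec_mono _ (hFmono S)
  set Φ : Set ↥A → (ℝ≥0 → X → X) := fun S t z => if t = 0 then z else F S z with hΦ
  have hΦflow : ∀ S : Set ↥A, IsSemiflow (Φ S) := by
    intro S
    refine ⟨?_, fun z => if_pos rfl, ?_⟩
    · rw [continuous_def]
      intro U hU
      have hUsub : U ⊆ F S ⁻¹' U := fun z hz => (hFle S z).mem_open hU hz
      have hpre : (fun p : ℝ≥0 × X => Φ S p.1 p.2) ⁻¹' U =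
          (Set.univ ×ˢ U) ∪ (Set.Ioi 0 ×ˢ (F S ⁻¹' U)) := by
        ext ⟨t, z⟩
        simp only [Set.mem_preimage, Set.mem_union, Set.mem_prod, Set.mem_univ, true_and,
          Set.mem_Ioi, hΦ]
        rcases eq_or_ne t 0 with rfl | ht
        · simp [lt_irrefl]
        · have ht' : (0 : ℝ≥0) < t := pos_iff_ne_zero.2 ht
          rw [if_neg ht]
          constructor
          · intro hFz
            exact Or.inr ⟨ht', hFz⟩
          · rintro (hz | ⟨-, hFz⟩)
            · exact hUsub hz
            · exact hFz
      rw [hpre]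
      exact (isOpen_univ.prod hU).union (isOpen_Ioi.prod ((hcontF S).isOpen_preimage U hU))
    · intro s t z
      rcases eq_or_ne t 0 with rfl | ht
      · simp only [hΦ, if_pos rfl, add_zero]
      · rcases eq_or_ne s 0 with rfl | hs
        · simp only [hΦ, if_pos rfl, zero_add, if_neg ht]
        · have hst : s + t ≠ 0 := by
            simp only [ne_eq, add_eq_zero]
            tauto
          simp only [hΦ, if_neg ht, if_neg hs, if_neg hst]
          exact hFidem S z
  have hinj : Function.Injective
      (fun S : Set ↥A => (⟨Φ S, hΦflow S⟩ : {φ : ℝ≥0 → X → X // IsSemiflow φ})) := by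
    intro S T hST
    have hΦeq : Φ S = Φ T := congrArg Subtype.val hST
    ext a
    constructor
    · intro haS
      by_contra haT
      have h1 : Φ S 1 a.1 = Φ T 1 a.1 := by rw [hΦeq]
      simp only [hΦ, if_neg (one_ne_zero : (1:ℝ≥0) ≠ 0)] at h1
      rw [hFout T a haT] at h1
      exact hFin S a haS h1
    · intro haT
      by_contra haS
      have h1 : Φ S 1 a.1 = Φ T 1 a.1 := by rw [hΦeq]
      simp only [hΦ, if_neg (one_ne_zero : (1:ℝ≥0) ≠ 0)] at h1
      rw [hFout S a haS] at h1
      exact hFin T a haT h1.symm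
  have hfin : Finite {φ : ℝ≥0 → X → X // IsSemiflow φ} := finite_semiflows
  have hftA : Fintype ↥A := Fintype.ofFinite ↥A
  calc 2 ^ A.ncard = Nat.card (Set ↥A) := by
        rw [Nat.card_eq_fintype_card, Fintype.card_set, ← Nat.card_coe_set_eq,
          Nat.card_eq_fintype_card]
    _ ≤ Nat.card {φ : ℝ≥0 → X → X // IsSemiflow φ} :=
        Nat.card_le_card_of_injective _ hinj
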